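/- arXiv:2507.22597 — 2 statements merged into one kernel-verified Lean document; each statement's English description precedes it below -/
import Mathlib

section
/- Let q be a prime power, m ≥ 1, and let w = (1, w_1, …, w_m) be a weight vector of positive integers with w_0 = 1. If d ≥ w_1 q + 1, then the polynomial f = x_0^{d − w_1 q − 1}·(x_0 x_1^q − x_0^{w_1(q−1)+1} x_1) is a nonzero weighted homogeneous polynomial of degree d in 𝔽_q[x_0,…,x_m]^w that vanishes at every 𝔽_q-point of ℙ(w); consequently e_q(d; 1, w_1, …, w_m) = p_m for every d ≥ w_1 q + 1. -/
open MvPolynomial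

noncomputable section

/-- `pSum q k = 1 + q + ⋯ + q^(k-1)`; so `p_m = pSum q (m+1)`. -/
def pSum (q k : ℕ) : ℕ := ∑ i ∈ Finset.range k, q ^ i

/-- Equivalence of nonzero vectors under weighted scaling by the algebraic closure. -/
def wRel (F : Type) [Field F] {m : ℕ} (w : Fin (m + 1) → ℕ)
    (x y : {v : Fin (m + 1) → AlgebraicClosure F // v ≠ 0}) : Prop :=
  ∃ lam : (AlgebraicClosure F)ˣ, ∀ i, y.1 i = (lam : AlgebraicClosure F) ^ w i * x.1 i

/-- The weighted projective space `ℙ(w)` as set of orbits. -/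
def PW (F : Type) [Field F] {m : ℕ} (w : Fin (m + 1) → ℕ) : Type :=
  Quot (wRel F w)

def PW.mk (F : Type) [Field F] {m : ℕ} (w : Fin (m + 1) → ℕ)
    (x : {v : Fin (m + 1) → AlgebraicClosure F // v ≠ 0}) : PW F w :=
  Quot.mk _ x

/-- The `𝔽_q`-rational points of `ℙ(w)`: orbits fixed by coordinatewise Frobenius. -/
def ratPts (F : Type) [Field F] [Fintype F] {m : ℕ} (w : Fin (m + 1) → ℕ) :
    Set (PW F w) :=
  {c | ∃ x : {v : Fin (m + 1) → AlgebraicClosure F // v ≠ 0},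
    PW.mk F w x = c ∧
    ∃ h : (fun i => x.1 i ^ Fintype.card F) ≠ (0 : Fin (m + 1) → AlgebraicClosure F),
      PW.mk F w ⟨fun i => x.1 i ^ Fintype.card F, h⟩ = c}

/-- `V_{ℙ(w)}(f)(𝔽_q)`: the rational points at which `f` vanishes. -/
def vanishSet (F : Type) [Field F] [Fintype F] {m : ℕ} (w : Fin (m + 1) → ℕ)
    (f : MvPolynomial (Fin (m + 1)) F) : Set (PW F w) :=
  {c | c ∈ ratPts F w ∧ ∀ x, PW.mk F w x = c →
    MvPolynomial.eval x.1 (MvPolynomial.map (algebraMap F (AlgebraicClosure F)) f) = 0}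

/-- `e_q(d; w)`: the maximal number of rational zeroes of a nonzero
weighted homogeneous polynomial of degree `d`. -/
def eMax (F : Type) [Field F] [Fintype F] {m : ℕ} (w : Fin (m + 1) → ℕ) (d : ℕ) : ℕ :=
  sSup {n | ∃ f : MvPolynomial (Fin (m + 1)) F,
    f ≠ 0 ∧ MvPolynomial.IsWeightedHomogeneous w f d ∧ n = (vanishSet F w f).ncard}

/-- weighted degree of a monomial (exponent vector). -/
def wdeg {m : ℕ} (w : Fin (m + 1) → ℕ) (a : Fin (m + 1) →₀ ℕ) : ℕ := ∑ i, w i * a i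

/-- degree-lexicographic order (weighted degree first, `x_0 < x_1 < ⋯ < x_m`). -/
def dlexLt {m : ℕ} (w : Fin (m + 1) → ℕ) (a b : Fin (m + 1) →₀ ℕ) : Prop :=
  wdeg w a < wdeg w b ∨
    (wdeg w a = wdeg w b ∧ ∃ i, a i < b i ∧ ∀ j, i < j → a j = b j)

/-- `a` is the initial monomial of `f` for the weighted deglex order. -/
def IsInitial (F : Type) [Field F] {m : ℕ} (w : Fin (m + 1) → ℕ)
    (f : MvPolynomial (Fin (m + 1)) F) (a : Fin (m + 1) →₀ ℕ) : Prop :=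
  a ∈ f.support ∧ ∀ b ∈ f.support, b ≠ a → dlexLt w b a

/-- The vanishing ideal `I(ℙ(w)(𝔽_q))`, generated by the homogeneous polynomials
vanishing at every rational point. -/
def vanishingIdeal (F : Type) [Field F] [Fintype F] {m : ℕ} (w : Fin (m + 1) → ℕ) :
    Ideal (MvPolynomial (Fin (m + 1)) F) :=
  Ideal.span {g | (∃ e, MvPolynomial.IsWeightedHomogeneous w g e) ∧
    ∀ c ∈ ratPts F w, ∀ x, PW.mk F w x = c →
      MvPolynomial.eval x.1 (MvPolynomial.map (algebraMap F (AlgebraicClosure F)) g) = 0}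

/-- `M̄`: monomials divisible by no initial monomial of a nonzero homogeneous
element of the vanishing ideal. -/
def Mbar (F : Type) [Field F] [Fintype F] {m : ℕ} (w : Fin (m + 1) → ℕ) :
    Set (Fin (m + 1) →₀ ℕ) :=
  {a | ¬ ∃ g : MvPolynomial (Fin (m + 1)) F, g ≠ 0 ∧ g ∈ vanishingIdeal F w ∧
    (∃ e, MvPolynomial.IsWeightedHomogeneous w g e) ∧ ∃ b, IsInitial F w g b ∧ b ≤ a}

/-- `M̄_d`. -/
def MbarD (F : Type) [Field F] [Fintype F] {m : ℕ} (w : Fin (m + 1) → ℕ) (d : ℕ) :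
    Set (Fin (m + 1) →₀ ℕ) :=
  {a ∈ Mbar F w | wdeg w a = d}

/-- `M̄_{d,i}`. -/
def MbarDI (F : Type) [Field F] [Fintype F] {m : ℕ} (w : Fin (m + 1) → ℕ) (d : ℕ)
    (i : Fin (m + 1)) : Set (Fin (m + 1) →₀ ℕ) :=
  {a ∈ MbarD F w d | (∀ t, t < i → a t = 0) ∧ 1 ≤ a i}

/-- The regularity set `reg(ℙ(w)(𝔽_q)) = {d ≥ 1 : |M̄_d| = p_m}`. -/
def regSet (F : Type) [Field F] [Fintype F] {m : ℕ} (w : Fin (m + 1) → ℕ) : Set ℕ :=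
  {d | 1 ≤ d ∧ (MbarD F w d).ncard = pSum (Fintype.card F) (m + 1)}

/-- Footprint bound at level `dtil`: number of monomials of `M̄_{dtil}` divisible by `a`. -/
def FB (F : Type) [Field F] [Fintype F] {m : ℕ} (w : Fin (m + 1) → ℕ) (dtil : ℕ)
    (a : Fin (m + 1) →₀ ℕ) : ℕ :=
  {b | b ∈ MbarD F w dtil ∧ a ≤ b}.ncard

/-- `FB_i`: number of monomials of `M̄_{dtil, i}` divisible by `a`. -/
def FBi (F : Type) [Field F] [Fintype F] {m : ℕ} (w : Fin (m + 1) → ℕ) (dtil : ℕ)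
    (i : Fin (m + 1)) (a : Fin (m + 1) →₀ ℕ) : ℕ :=
  {b | b ∈ MbarDI F w dtil i ∧ a ≤ b}.ncard

/-- Hilbert function of `𝔽_q[x]/I(ℙ(w)(𝔽_q))` at degree `d`. -/
def hilb (F : Type) [Field F] [Fintype F] {m : ℕ} (w : Fin (m + 1) → ℕ) (d : ℕ) : ℕ :=
  Module.finrank F
    (↥(weightedHomogeneousSubmodule F w d) ⧸
      (Submodule.comap (weightedHomogeneousSubmodule F w d).subtype
        (Submodule.restrictScalars F (vanishingIdeal F w))))

/-- Denumerant: the number of representations `d = w0*i0 + w1*i1`. -/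
def den (w0 w1 d : ℕ) : ℕ := {p : ℕ × ℕ | w0 * p.1 + w1 * p.2 = d}.ncard




section Aux

-- Lemma: wRel is an equivalence
lemma wRel_equivalence (F : Type) [Field F] {m : ℕ} (w : Fin (m + 1) → ℕ) :
    Equivalence (wRel F w) := by
  constructor
  · intro x; exact ⟨1, fun i => by simp⟩
  · rintro x y ⟨l, hl⟩
    refine ⟨l⁻¹, fun i => ?_⟩
    rw [hl i, ← mul_assoc, ← mul_pow]
    simp
  · rintro x y z ⟨l, hl⟩ ⟨l', hl'⟩
    refine ⟨l' * l, fun i => ?_⟩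
    rw [hl' i, hl i, ← mul_assoc, ← mul_pow]
    simp

lemma mk_eq_mk {F : Type} [Field F] {m : ℕ} {w : Fin (m + 1) → ℕ}
    {x y : {v : Fin (m + 1) → AlgebraicClosure F // v ≠ 0}} :
    PW.mk F w x = PW.mk F w y ↔ wRel F w x y := by
  rw [PW.mk, PW.mk]
  exact (Quot.eq (r := wRel F w)).trans (Equivalence.eqvGen_iff (wRel_equivalence F w))

-- Lemma: fixed points of Frobenius are in the prime field image
lemma frob_fix {F : Type} [Field F] [Fintype F] {z : AlgebraicClosure F}
    (hz : z ^ Fintype.card F = z) : ∃ a : F, algebraMap F (AlgebraicClosure F) a = z := by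
  classical
  set q := Fintype.card F with hq
  set φ := algebraMap F (AlgebraicClosure F) with hφ
  have hq2 : 2 ≤ q := Fintype.one_lt_card
  set pol : Polynomial (AlgebraicClosure F) := Polynomial.X ^ q - Polynomial.X with hpol
  have hdeg : pol.natDegree = q := by
    rw [hpol, Polynomial.natDegree_sub_eq_left_of_natDegree_lt] <;>
      simp [Polynomial.natDegree_X_pow, Polynomial.natDegree_X] <;> omega
  have hpol0 : pol ≠ 0 := by
    intro h; rw [h] at hdeg; simp at hdeg; omega
  have hFsub : (Finset.univ.image φ : Finset (AlgebraicClosure F)) ⊆ pol.roots.toFinset := by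
    intro x hx
    simp only [Finset.mem_image] at hx
    obtain ⟨a, _, rfl⟩ := hx
    rw [Multiset.mem_toFinset, Polynomial.mem_roots hpol0]
    simp only [Polynomial.IsRoot, hpol, Polynomial.eval_sub, Polynomial.eval_pow,
      Polynomial.eval_X]
    rw [← map_pow, FiniteField.pow_card, sub_self]
  have hcard : pol.roots.toFinset.card ≤ q :=
    le_trans (Multiset.toFinset_card_le _) (le_trans (Polynomial.card_roots' pol) (le_of_eq hdeg))
  have himg : (Finset.univ.image φ).card = q := by
    rw [Finset.card_image_of_injective _ (algebraMap F _).injective, Finset.card_univ, hq]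
  have heq : Finset.univ.image φ = pol.roots.toFinset :=
    Finset.eq_of_subset_of_card_le hFsub (by rw [himg]; exact hcard)
  have hz' : z ∈ pol.roots.toFinset := by
    rw [Multiset.mem_toFinset, Polynomial.mem_roots hpol0]
    simp only [Polynomial.IsRoot, hpol, Polynomial.eval_sub, Polynomial.eval_pow,
      Polynomial.eval_X, hz, sub_self]
  rw [← heq] at hz'
  obtain ⟨a, _, ha⟩ := Finset.mem_image.1 hz'
  exact ⟨a, ha⟩


-- embed an F-vector into the closure
def emb (F : Type) [Field F] {m : ℕ} (v : Fin (m + 1) → F) :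
    Fin (m + 1) → AlgebraicClosure F := fun i => algebraMap F (AlgebraicClosure F) (v i)

lemma emb_ne_zero {F : Type} [Field F] {m : ℕ} {v : Fin (m + 1) → F} (hv : v ≠ 0) :
    emb F v ≠ 0 := by
  intro h0
  apply hv
  funext i
  have := congrFun h0 i
  simpa [emb] using this

open Classical in
def Phi (F : Type) [Field F] {m : ℕ} (w : Fin (m + 1) → ℕ) (v : Fin (m + 1) → F) :
    PW F w :=
  if h : v = 0 then
    PW.mk F w ⟨fun _ => 1, fun h0 => one_ne_zero (congrFun h0 0)⟩
  else PW.mk F w ⟨emb F v, emb_ne_zero h⟩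

lemma Phi_mem_ratPts {F : Type} [Field F] [Fintype F] {m : ℕ} {w : Fin (m + 1) → ℕ}
    {v : Fin (m + 1) → F} (hv : v ≠ 0) : Phi F w v ∈ ratPts F w := by
  rw [Phi, dif_neg hv]
  refine ⟨⟨emb F v, emb_ne_zero hv⟩, rfl, ?_⟩
  have hfix : (fun i => emb F v i ^ Fintype.card F) = emb F v := by
    funext i
    rw [emb, ← map_pow, FiniteField.pow_card]
  refine ⟨by rw [hfix]; exact emb_ne_zero hv, ?_⟩
  exact congrArg (PW.mk F w) (Subtype.ext hfix)

lemma exists_F_point {F : Type} [Field F] [Fintype F] {m : ℕ} {w : Fin (m + 1) → ℕ}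
    {c : PW F w} (hc : c ∈ ratPts F w) :
    ∃ v : Fin (m + 1) → F, v ≠ 0 ∧ Phi F w v = c := by
  classical
  obtain ⟨x, hx1, hne, hx2⟩ := hc
  set q := Fintype.card F with hqdef
  have hq1 : 1 ≤ q := Fintype.card_pos
  have hrel : wRel F w x ⟨fun i => x.1 i ^ q, hne⟩ := mk_eq_mk.1 (by rw [hx2, hx1])
  obtain ⟨l, hl⟩ := hrel
  obtain ⟨μ, hμ⟩ := IsAlgClosed.exists_pow_nat_eq
    ((l⁻¹ : (AlgebraicClosure F)ˣ) : AlgebraicClosure F) (n := q - 1) (by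
      have : 2 ≤ q := Fintype.one_lt_card
      omega)
  have hμ0 : μ ≠ 0 := by
    intro h
    rw [h, zero_pow (by have : 2 ≤ q := Fintype.one_lt_card; omega)] at hμ
    exact Units.ne_zero l⁻¹ hμ.symm
  set y : Fin (m + 1) → AlgebraicClosure F := fun i => μ ^ w i * x.1 i with hy
  have hy0 : y ≠ 0 := by
    intro h0
    apply x.2
    funext i
    have := congrFun h0 i
    simp only [hy, Pi.zero_apply, mul_eq_zero, pow_eq_zero_iff'] at this
    rcases this with h | h
    · exact absurd h.1 hμ0
    · exact h
  have hyfix : ∀ i, y i ^ q = y i := by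
    intro i
    have hx : x.1 i ^ q = (l : AlgebraicClosure F) ^ w i * x.1 i := hl i
    calc y i ^ q = (μ ^ w i) ^ q * x.1 i ^ q := by rw [hy]; ring
    _ = (μ ^ w i) ^ q * ((l : AlgebraicClosure F) ^ w i * x.1 i) := by rw [hx]
    _ = μ ^ w i * ((μ ^ (q - 1) * (l : AlgebraicClosure F)) ^ w i) * x.1 i := by
        rw [mul_pow, ← pow_mul, ← pow_mul]
        have : w i * q = w i + w i * (q - 1) := by
          obtain ⟨s, hs⟩ : ∃ s, q = s + 1 := ⟨q - 1, by omega⟩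
          rw [hs, Nat.add_sub_cancel, Nat.mul_succ]
          ring
        rw [this, pow_add]; ring
    _ = μ ^ w i * x.1 i := by
        rw [hμ]
        have : ((l⁻¹ : (AlgebraicClosure F)ˣ) : AlgebraicClosure F) *
            (l : AlgebraicClosure F) = 1 := by
          rw [← Units.val_mul, inv_mul_cancel, Units.val_one]
        rw [this, one_pow, mul_one]
    _ = y i := rfl
  choose vv hvv using fun i => frob_fix (hyfix i)
  refine ⟨vv, ?_, ?_⟩
  · intro h0
    apply hy0
    funext i
    have : vv i = 0 := congrFun h0 i
    rw [← hvv i, this, map_zero]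
    simp
  · have hvne : vv ≠ 0 := by
      intro h0
      apply hy0
      funext i
      have : vv i = 0 := congrFun h0 i
      rw [← hvv i, this, map_zero]
      simp
    rw [Phi, dif_neg hvne, ← hx1]
    apply mk_eq_mk.2
    apply (wRel_equivalence F w).symm
    exact ⟨Units.mk0 μ hμ0, fun i => by
      show emb F vv i = _
      rw [emb, hvv i, hy]
      simp⟩

variable (F : Type) [Field F] [Fintype F] {m : ℕ} (w : Fin (m + 1) → ℕ)

def powCond (v : Fin (m + 1) → F) (n : ℕ) : Subgroup (AlgebraicClosure F)ˣ where
  carrier := {l | ∀ i, v i ≠ 0 → l ^ (w i * n) = 1}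
  one_mem' := fun i _ => one_pow _
  mul_mem' := by
    intro a b ha hb i hi
    rw [mul_pow, ha i hi, hb i hi, one_mul]
  inv_mem' := by
    intro a ha i hi
    rw [inv_pow, ha i hi, inv_one]

lemma mem_powCond_iff {v : Fin (m + 1) → F} {n : ℕ} {l : (AlgebraicClosure F)ˣ} :
    l ∈ powCond F w v n ↔ ∀ i, v i ≠ 0 → l ^ (w i * n) = 1 := Iff.rfl

lemma powCond_finite (hpos : ∀ i, 1 ≤ w i) (v : Fin (m + 1) → F) {i₀ : Fin (m + 1)}
    (hi₀ : v i₀ ≠ 0) {n : ℕ} (hn : 0 < n) : Finite (powCond F w v n) := by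
  have hN : 0 < w i₀ * n := Nat.mul_pos (hpos i₀) hn
  have hinj : Function.Injective (fun l : powCond F w v n =>
      (⟨((l : (AlgebraicClosure F)ˣ) : AlgebraicClosure F), by
        rw [Polynomial.mem_nthRootsFinset hN (1 : AlgebraicClosure F), ← Units.val_pow_eq_pow_val, l.2 i₀ hi₀,
          Units.val_one]⟩ :
        {x // x ∈ Polynomial.nthRootsFinset (w i₀ * n) (1 : AlgebraicClosure F)})) := by
    intro a b hab
    apply Subtype.ext; apply Units.ext
    exact congrArg Subtype.val hab
  exact Finite.of_injective _ hinj

open Classical in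
def theta (v : Fin (m + 1) → F) (l : (AlgebraicClosure F)ˣ) : Fin (m + 1) → F := fun i =>
  if h : ∃ a : F, algebraMap F (AlgebraicClosure F) a
      = (l : AlgebraicClosure F) ^ w i * algebraMap F (AlgebraicClosure F) (v i)
  then Classical.choose h else 0

lemma theta_spec (v : Fin (m + 1) → F) {l : (AlgebraicClosure F)ˣ}
    (hl : l ∈ powCond F w v (Fintype.card F - 1)) (i : Fin (m + 1)) :
    algebraMap F (AlgebraicClosure F) (theta F w v l i)
      = (l : AlgebraicClosure F) ^ w i * algebraMap F (AlgebraicClosure F) (v i) := by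
  classical
  have hq2 : 2 ≤ Fintype.card F := Fintype.one_lt_card
  set q := Fintype.card F with hq
  have hex : ∃ a : F, algebraMap F (AlgebraicClosure F) a
      = (l : AlgebraicClosure F) ^ w i * algebraMap F (AlgebraicClosure F) (v i) := by
    apply frob_fix
    by_cases hvi : v i = 0
    · rw [hvi, map_zero, mul_zero, zero_pow (by omega)]
    · have h1 : ((l : AlgebraicClosure F) ^ w i) ^ (q - 1) = 1 := by
        rw [← pow_mul, ← Units.val_pow_eq_pow_val, hl i hvi, Units.val_one]
      have h2 : (algebraMap F (AlgebraicClosure F) (v i)) ^ q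
          = algebraMap F (AlgebraicClosure F) (v i) := by
        rw [← map_pow, FiniteField.pow_card]
      calc ((l : AlgebraicClosure F) ^ w i * algebraMap F (AlgebraicClosure F) (v i)) ^ q
          = ((l : AlgebraicClosure F) ^ w i) ^ q
            * (algebraMap F (AlgebraicClosure F) (v i)) ^ q := mul_pow _ _ _
        _ = ((l : AlgebraicClosure F) ^ w i) ^ ((q - 1) + 1)
            * algebraMap F (AlgebraicClosure F) (v i) := by
            rw [h2]; congr 1; congr 1; omega
        _ = (l : AlgebraicClosure F) ^ w i * algebraMap F (AlgebraicClosure F) (v i) := by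
            rw [pow_succ, h1, one_mul]
  simp only [theta]
  rw [dif_pos hex]
  exact Classical.choose_spec hex

lemma theta_ne_zero (v : Fin (m + 1) → F) {l : (AlgebraicClosure F)ˣ}
    (hl : l ∈ powCond F w v (Fintype.card F - 1)) {i₀ : Fin (m + 1)} (hi₀ : v i₀ ≠ 0) :
    theta F w v l ≠ 0 := by
  intro h0
  have h := theta_spec F w v hl i₀
  rw [congrFun h0 i₀] at h
  simp only [Pi.zero_apply, map_zero] at h
  have : (l : AlgebraicClosure F) ^ w i₀ * algebraMap F (AlgebraicClosure F) (v i₀) ≠ 0 := by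
    apply mul_ne_zero
    · exact pow_ne_zero _ (Units.ne_zero l)
    · simpa using hi₀
  exact this h.symm

lemma theta_Phi (v : Fin (m + 1) → F) (hv : v ≠ 0) {l : (AlgebraicClosure F)ˣ}
    (hl : l ∈ powCond F w v (Fintype.card F - 1)) :
    Phi F w (theta F w v l) = Phi F w v := by
  obtain ⟨i₀, hi₀⟩ : ∃ i, v i ≠ 0 := by
    by_contra h; push_neg at h; exact hv (funext fun i => h i)
  have hne := theta_ne_zero F w v hl hi₀
  rw [Phi, Phi, dif_neg hne, dif_neg hv]
  apply mk_eq_mk.2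
  apply (wRel_equivalence F w).symm
  exact ⟨l, fun i => theta_spec F w v hl i⟩

lemma theta_surj (v : Fin (m + 1) → F) (hv : v ≠ 0) {v' : Fin (m + 1) → F} (hv' : v' ≠ 0)
    (h : Phi F w v' = Phi F w v) :
    ∃ l, ∃ _ : l ∈ powCond F w v (Fintype.card F - 1), theta F w v l = v' := by
  rw [Phi, Phi, dif_neg hv', dif_neg hv] at h
  obtain ⟨l, hl⟩ := (wRel_equivalence F w).symm (mk_eq_mk.1 h)
  -- hl : ∀ i, emb F v' i = l ^ w i * emb F v i
  have hq2 : 2 ≤ Fintype.card F := Fintype.one_lt_card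
  set q := Fintype.card F with hq
  have hmem : l ∈ powCond F w v (q - 1) := by
    intro i hi
    have hvine : algebraMap F (AlgebraicClosure F) (v i) ≠ 0 := by simpa using hi
    have hv'i : v' i ≠ 0 := by
      intro h0
      have := hl i
      simp only [emb] at this
      rw [h0, map_zero] at this
      exact (mul_ne_zero (pow_ne_zero _ (Units.ne_zero l)) hvine) this.symm
    have h1 : (algebraMap F (AlgebraicClosure F) (v' i)) ^ (q - 1) = 1 := by
      rw [← map_pow, FiniteField.pow_card_sub_one_eq_one _ hv'i, map_one]
    have h2 : (algebraMap F (AlgebraicClosure F) (v i)) ^ (q - 1) = 1 := by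
      rw [← map_pow, FiniteField.pow_card_sub_one_eq_one _ hi, map_one]
    have h3 : ((l : AlgebraicClosure F) ^ (w i * (q - 1)))
        * (algebraMap F (AlgebraicClosure F) (v i)) ^ (q - 1)
        = (algebraMap F (AlgebraicClosure F) (v' i)) ^ (q - 1) := by
      rw [pow_mul, ← mul_pow]
      congr 1
      exact (hl i).symm
    rw [h1, h2, mul_one] at h3
    apply Units.ext
    push_cast
    exact h3
  refine ⟨l, hmem, ?_⟩
  funext i
  apply (algebraMap F (AlgebraicClosure F)).injective
  rw [theta_spec F w v hmem i]
  exact (hl i).symm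

-- counting helper
lemma card_of_fibers {α β : Type} [Finite α] [Finite β] (f : α → β) (k : ℕ)
    (hf : ∀ b : β, Nat.card {a : α // f a = b} = k) :
    Nat.card α = Nat.card β * k := by
  classical
  cases nonempty_fintype α
  cases nonempty_fintype β
  rw [Nat.card_eq_fintype_card, Nat.card_eq_fintype_card]
  rw [Fintype.card_congr (Equiv.sigmaFiberEquiv f).symm, Fintype.card_sigma]
  have : ∀ b : β, Fintype.card {a : α // f a = b} = k := by
    intro b
    rw [← Nat.card_eq_fintype_card]
    exact hf b
  simp [this, Finset.sum_const, Finset.card_univ, Nat.mul_comm]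

lemma card_S_eq (hpos : ∀ i, 1 ≤ w i) (v : Fin (m + 1) → F) {i₀ : Fin (m + 1)}
    (hi₀ : v i₀ ≠ 0) :
    Nat.card (powCond F w v (Fintype.card F - 1))
      = Nat.card (powCond F w v 1) * (Fintype.card F - 1) := by
  classical
  have hq2 : 2 ≤ Fintype.card F := Fintype.one_lt_card
  set q := Fintype.card F with hq
  haveI hSfin : Finite (powCond F w v (q - 1)) := powCond_finite F w hpos v hi₀ (by omega)
  haveI hTfin : Finite (powCond F w v 1) := powCond_finite F w hpos v hi₀ one_pos
  set ψ : powCond F w v (q - 1) →* powCond F w v 1 :=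
    MonoidHom.mk' (fun l => ⟨(l : (AlgebraicClosure F)ˣ) ^ (q - 1), fun i hi => by
      rw [mul_one, ← pow_mul, Nat.mul_comm]
      exact l.2 i hi⟩)
      (fun a b => by
        apply Subtype.ext
        push_cast
        rw [mul_pow]) with hψ
  have hψval : ∀ l : powCond F w v (q - 1),
      ((ψ l : powCond F w v 1) : (AlgebraicClosure F)ˣ)
        = (l : (AlgebraicClosure F)ˣ) ^ (q - 1) := fun l => rfl
  have hsurj : Function.Surjective ψ := by
    rintro ⟨t, ht⟩
    obtain ⟨μ, hμ⟩ := IsAlgClosed.exists_pow_nat_eq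
      ((t : AlgebraicClosure F)) (n := q - 1) (by omega)
    have hμ0 : μ ≠ 0 := by
      intro h0; rw [h0, zero_pow (by omega : q - 1 ≠ 0)] at hμ
      exact Units.ne_zero t hμ.symm
    have hu : (Units.mk0 μ hμ0) ^ (q - 1) = t := by
      apply Units.ext; push_cast; exact hμ
    have hmem : Units.mk0 μ hμ0 ∈ powCond F w v (q - 1) := by
      intro i hi
      rw [Nat.mul_comm, pow_mul, hu]
      have h2 := ht i hi
      rwa [mul_one] at h2
    refine ⟨⟨Units.mk0 μ hμ0, hmem⟩, ?_⟩
    apply Subtype.ext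
    rw [hψval]
    exact hu
  have hker : Nat.card ψ.ker = q - 1 := by
    set Φu : Fˣ →* (AlgebraicClosure F)ˣ :=
      Units.map (algebraMap F (AlgebraicClosure F)).toMonoidHom with hΦu
    have hΦinj : Function.Injective Φu :=
      Units.map_injective (algebraMap F (AlgebraicClosure F)).injective
    have hpow : ∀ a : Fˣ, a ^ (q - 1) = 1 := by
      intro a
      have h : a ^ Fintype.card Fˣ = 1 := pow_card_eq_one
      rwa [Fintype.card_units] at h
    have hmemS : ∀ a : Fˣ, Φu a ∈ powCond F w v (q - 1) := by
      intro a i hi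
      rw [Nat.mul_comm, pow_mul, ← map_pow, hpow a, map_one, one_pow]
    have hmemker : ∀ a : Fˣ, (⟨Φu a, hmemS a⟩ : powCond F w v (q - 1)) ∈ ψ.ker := by
      intro a
      rw [MonoidHom.mem_ker]
      apply Subtype.ext
      rw [hψval]
      show (Φu a) ^ (q - 1) = ((1 : powCond F w v 1) : (AlgebraicClosure F)ˣ)
      rw [← map_pow, hpow a, map_one, OneMemClass.coe_one]
    set e : Fˣ → ψ.ker := fun a => ⟨⟨Φu a, hmemS a⟩, hmemker a⟩ with he
    have hbij : Function.Bijective e := by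
      constructor
      · intro a b hab
        apply hΦinj
        exact congrArg
          (fun x : ψ.ker => ((x : powCond F w v (q - 1)) : (AlgebraicClosure F)ˣ)) hab
      · rintro ⟨⟨l, hlS⟩, hlker⟩
        rw [MonoidHom.mem_ker] at hlker
        have h1 : (l : AlgebraicClosure F) ^ (q - 1) = 1 := by
          have h := congrArg
            (fun x => ((x : powCond F w v 1) : (AlgebraicClosure F)ˣ)) hlker
          rw [hψval] at h
          have h' := congrArg Units.val h
          push_cast at h'
          exact_mod_cast h'
        have h2 : (l : AlgebraicClosure F) ^ q = (l : AlgebraicClosure F) := by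
          calc (l : AlgebraicClosure F) ^ q
              = (l : AlgebraicClosure F) ^ ((q - 1) + 1) := by congr 1; omega
            _ = (l : AlgebraicClosure F) := by rw [pow_succ, h1, one_mul]
        obtain ⟨a, ha⟩ := frob_fix h2
        have ha0 : a ≠ 0 := by
          intro h0; rw [h0, map_zero] at ha; exact Units.ne_zero l ha.symm
        refine ⟨Units.mk0 a ha0, ?_⟩
        apply Subtype.ext; apply Subtype.ext; apply Units.ext
        exact ha
    rw [← Nat.card_congr (Equiv.ofBijective e hbij), Nat.card_eq_fintype_card,
      Fintype.card_units]
  calc Nat.card (powCond F w v (q - 1))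
      = Nat.card ((powCond F w v (q - 1)) ⧸ ψ.ker) * Nat.card ψ.ker :=
        Subgroup.card_eq_card_quotient_mul_card_subgroup ψ.ker
    _ = Nat.card (powCond F w v 1) * (q - 1) := by
        rw [hker,
          Nat.card_congr (QuotientGroup.quotientKerEquivOfSurjective ψ hsurj).toEquiv]

lemma fiber_card (hpos : ∀ i, 1 ≤ w i) (v : Fin (m + 1) → F) (hv : v ≠ 0) :
    Nat.card {p : {u : Fin (m + 1) → F // u ≠ 0} // Phi F w p.1 = Phi F w v}
      = Fintype.card F - 1 := by
  classical
  have hq2 : 2 ≤ Fintype.card F := Fintype.one_lt_card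
  set q := Fintype.card F with hq
  obtain ⟨i₀, hi₀⟩ : ∃ i, v i ≠ 0 := by
    by_contra h; push_neg at h; exact hv (funext fun i => h i)
  haveI hSfin : Finite (powCond F w v (q - 1)) := powCond_finite F w hpos v hi₀ (by omega)
  haveI hTfin : Finite (powCond F w v 1) := powCond_finite F w hpos v hi₀ one_pos
  set Θ : powCond F w v (q - 1)
      → {p : {u : Fin (m + 1) → F // u ≠ 0} // Phi F w p.1 = Phi F w v} :=
    fun l => ⟨⟨theta F w v l, theta_ne_zero F w v l.2 hi₀⟩, theta_Phi F w v hv l.2⟩ with hΘ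
  have hTS : ∀ t : (AlgebraicClosure F)ˣ, t ∈ powCond F w v 1 → t ∈ powCond F w v (q - 1) := by
    intro t ht i hi
    have h := ht i hi
    rw [mul_one] at h
    rw [pow_mul, h, one_pow]
  have hfib : ∀ b, Nat.card {l : powCond F w v (q - 1) // Θ l = b}
      = Nat.card (powCond F w v 1) := by
    rintro ⟨⟨v', hv'⟩, hb⟩
    obtain ⟨l₀, hl₀S, hl₀⟩ := theta_surj F w v hv hv' hb
    set e : powCond F w v 1 → {l : powCond F w v (q - 1) // Θ l = ⟨⟨v', hv'⟩, hb⟩} :=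
      fun t => ⟨⟨(t : (AlgebraicClosure F)ˣ) * l₀, mul_mem (hTS t t.2) hl₀S⟩, by
        apply Subtype.ext; apply Subtype.ext
        show theta F w v _ = v'
        rw [← hl₀]
        funext i
        apply (algebraMap F (AlgebraicClosure F)).injective
        rw [theta_spec F w v (mul_mem (hTS t t.2) hl₀S) i, theta_spec F w v hl₀S i]
        by_cases hvi : v i = 0
        · rw [hvi, map_zero, mul_zero, mul_zero]
        · have ht1 : ((t : (AlgebraicClosure F)ˣ) : AlgebraicClosure F) ^ w i = 1 := by
            have h := t.2 i hvi
            rw [mul_one] at h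
            rw [← Units.val_pow_eq_pow_val, h, Units.val_one]
          push_cast
          rw [mul_pow, ht1, one_mul]⟩ with he
    have hbij : Function.Bijective e := by
      constructor
      · intro a b hab
        have h := congrArg
          (fun x : {l : powCond F w v (q - 1) // Θ l = ⟨⟨v', hv'⟩, hb⟩} =>
            ((x : powCond F w v (q - 1)) : (AlgebraicClosure F)ˣ)) hab
        apply Subtype.ext
        exact mul_right_cancel h
      · rintro ⟨⟨l, hlS⟩, hl⟩
        have hthl : theta F w v l = v' := by
          have h := congrArg (fun x => x.1.1) hl
          exact h
        have hpoweq : ∀ i, v i ≠ 0 → l ^ w i = l₀ ^ w i := by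
          intro i hi
          apply Units.ext
          have h1 := theta_spec F w v hlS i
          have h2 := theta_spec F w v hl₀S i
          rw [hthl] at h1
          rw [hl₀] at h2
          have h3 := h1.symm.trans h2
          have hvine : algebraMap F (AlgebraicClosure F) (v i) ≠ 0 := by simpa using hi
          have := mul_right_cancel₀ hvine h3
          push_cast
          exact this
        have hmemT : l * l₀⁻¹ ∈ powCond F w v 1 := by
          intro i hi
          rw [mul_one, mul_pow, hpoweq i hi, inv_pow, mul_inv_cancel]
        refine ⟨⟨l * l₀⁻¹, hmemT⟩, ?_⟩
        apply Subtype.ext; apply Subtype.ext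
        show (l * l₀⁻¹) * l₀ = l
        rw [inv_mul_cancel_right]
    exact Nat.card_congr (Equiv.ofBijective e hbij).symm
  have htot := card_of_fibers Θ (Nat.card (powCond F w v 1)) hfib
  rw [card_S_eq F w hpos v hi₀] at htot
  haveI : Nonempty (powCond F w v 1) := ⟨1⟩
  have hT0 : 0 < Nat.card (powCond F w v 1) := Nat.card_pos
  apply Nat.eq_of_mul_eq_mul_left hT0
  calc Nat.card (powCond F w v 1)
        * Nat.card {p : {u : Fin (m + 1) → F // u ≠ 0} // Phi F w p.1 = Phi F w v}
      = Nat.card {p : {u : Fin (m + 1) → F // u ≠ 0} // Phi F w p.1 = Phi F w v}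
        * Nat.card (powCond F w v 1) := Nat.mul_comm _ _
    _ = Nat.card (powCond F w v 1) * (q - 1) := htot.symm

lemma psum_mul {q : ℕ} (hq : 1 ≤ q) (k : ℕ) : pSum q k * (q - 1) = q ^ k - 1 := by
  induction k with
  | zero => simp [pSum]
  | succ n ih =>
    obtain ⟨s, hs⟩ : ∃ s, q = s + 1 := ⟨q - 1, by omega⟩
    have h1 : 1 ≤ q ^ n := Nat.one_le_pow _ _ (by omega)
    have h2 : q ^ (n + 1) = q ^ n * q := pow_succ q n
    have hsum : pSum q (n + 1) = pSum q n + q ^ n := by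
      rw [pSum, Finset.sum_range_succ, ← pSum]
    rw [hsum, add_mul, ih]
    have h4 : q ^ n * q = q ^ n * (q - 1) + q ^ n := by
      rw [← Nat.mul_succ]
      congr 1
      omega
    omega

lemma ratPts_card (hpos : ∀ i, 1 ≤ w i) :
    (ratPts F w).Finite ∧ (ratPts F w).ncard = pSum (Fintype.card F) (m + 1) := by
  classical
  have hq2 : 2 ≤ Fintype.card F := Fintype.one_lt_card
  set q := Fintype.card F with hq
  set f : {u : Fin (m + 1) → F // u ≠ 0} → ↥(ratPts F w) :=
    fun u => ⟨Phi F w u.1, Phi_mem_ratPts u.2⟩ with hf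
  have hfs : Function.Surjective f := by
    rintro ⟨c, hc⟩
    obtain ⟨v, hv0, hv⟩ := exists_F_point hc
    exact ⟨⟨v, hv0⟩, Subtype.ext hv⟩
  haveI hrfin : Finite ↥(ratPts F w) := Finite.of_surjective f hfs
  have hfin : (ratPts F w).Finite := Set.finite_coe_iff.1 hrfin
  have hAcard : Nat.card {u : Fin (m + 1) → F // u ≠ 0} = q ^ (m + 1) - 1 := by
    rw [Nat.card_eq_fintype_card]
    have h1 := Fintype.card_subtype_compl (fun u : Fin (m + 1) → F => u = 0)
    have h2 : Fintype.card {u : Fin (m + 1) → F // u = 0} = 1 :=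
      Fintype.card_subtype_eq (0 : Fin (m + 1) → F)
    have h3 : Fintype.card (Fin (m + 1) → F) = q ^ (m + 1) := by
      simp [hq]
    rw [h2, h3] at h1
    exact h1
  have hcards : Nat.card {u : Fin (m + 1) → F // u ≠ 0}
      = Nat.card ↥(ratPts F w) * (q - 1) := by
    apply card_of_fibers f
    rintro ⟨c, hc⟩
    obtain ⟨v, hv0, hv⟩ := exists_F_point hc
    rw [← fiber_card F w hpos v hv0]
    apply Nat.card_congr
    apply Equiv.subtypeEquivRight
    intro p
    constructor
    · intro h
      have := congrArg Subtype.val h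
      simp only [hf] at this
      rw [this, ← hv]
    · intro h
      apply Subtype.ext
      show Phi F w p.1 = c
      rw [h, hv]
  have hncard : (ratPts F w).ncard = Nat.card ↥(ratPts F w) :=
    (Nat.card_coe_set_eq _).symm
  refine ⟨hfin, ?_⟩
  rw [hncard]
  have hgeom : pSum q (m + 1) * (q - 1) = q ^ (m + 1) - 1 := psum_mul (by omega) _
  apply Nat.eq_of_mul_eq_mul_right (show 0 < q - 1 by omega)
  rw [← hcards, hAcard, hgeom]


end Aux

lemma f_decomp (F : Type) [Field F] {m : ℕ} (i0 i1 : Fin (m + 1)) (a b qq : ℕ) :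
    (X i0 ^ a * (X i0 * X i1 ^ qq - X i0 ^ b * X i1) : MvPolynomial (Fin (m + 1)) F)
      = monomial (Finsupp.single i0 (a + 1) + Finsupp.single i1 qq) 1
        - monomial (Finsupp.single i0 (a + b) + Finsupp.single i1 1) 1 := by
  rw [mul_sub]
  congr 1
  · rw [show (X i0 ^ a * (X i0 * X i1 ^ qq) : MvPolynomial (Fin (m + 1)) F)
        = X i0 ^ (a + 1) * X i1 ^ qq by ring]
    rw [X_pow_eq_monomial, X_pow_eq_monomial, monomial_mul, one_mul]
  · rw [show (X i0 ^ a * (X i0 ^ b * X i1) : MvPolynomial (Fin (m + 1)) F)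
        = X i0 ^ (a + b) * X i1 ^ 1 by ring]
    rw [X_pow_eq_monomial, X_pow_eq_monomial, monomial_mul, one_mul]

lemma weight_single {m : ℕ} (w : Fin (m + 1) → ℕ) (i : Fin (m + 1)) (n : ℕ) :
    (Finsupp.weight w) (Finsupp.single i n) = n * w i := by
  rw [Finsupp.weight_apply, Finsupp.sum_single_index]
  · rw [smul_eq_mul]
  · rw [zero_smul]

lemma main_poly (F : Type) [Field F] [Fintype F] {m : ℕ}
    (w : Fin (m + 1) → ℕ) (hpos : ∀ i, 1 ≤ w i) (i0 i1 : Fin (m + 1)) (h01 : i0 ≠ i1)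
    (hw0 : w i0 = 1) (d : ℕ) (hd : w i1 * Fintype.card F + 1 ≤ d) :
    (X i0 ^ (d - w i1 * Fintype.card F - 1) *
      (X i0 * X i1 ^ Fintype.card F -
        X i0 ^ (w i1 * (Fintype.card F - 1) + 1) * X i1) : MvPolynomial (Fin (m + 1)) F) ≠ 0
    ∧ MvPolynomial.IsWeightedHomogeneous w
      (X i0 ^ (d - w i1 * Fintype.card F - 1) *
        (X i0 * X i1 ^ Fintype.card F -
          X i0 ^ (w i1 * (Fintype.card F - 1) + 1) * X i1) : MvPolynomial (Fin (m + 1)) F) d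
    ∧ vanishSet F w (X i0 ^ (d - w i1 * Fintype.card F - 1) *
        (X i0 * X i1 ^ Fintype.card F -
          X i0 ^ (w i1 * (Fintype.card F - 1) + 1) * X i1)) = ratPts F w := by
  classical
  have hq2 : 2 ≤ Fintype.card F := Fintype.one_lt_card
  set q := Fintype.card F with hq
  set a : ℕ := d - w i1 * q - 1 with ha
  set b : ℕ := w i1 * (q - 1) + 1 with hb
  set f : MvPolynomial (Fin (m + 1)) F :=
    X i0 ^ a * (X i0 * X i1 ^ q - X i0 ^ b * X i1) with hfdef
  have hdec := f_decomp F i0 i1 a b q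
  set e1 : Fin (m + 1) →₀ ℕ := Finsupp.single i0 (a + 1) + Finsupp.single i1 q with he1
  set e2 : Fin (m + 1) →₀ ℕ := Finsupp.single i0 (a + b) + Finsupp.single i1 1 with he2
  have hkey : w i1 * (q - 1) + w i1 = w i1 * q := by
    rw [← Nat.mul_succ]
    congr 1
    omega
  have hW : w i1 * q + 1 ≤ d := hd
  have hne12 : e2 ≠ e1 := by
    intro h
    have h' := DFunLike.congr_fun h i1
    rw [he1, he2] at h'
    simp [Finsupp.single_apply, h01] at h'
    omega
  have hfne : f ≠ 0 := by
    intro h0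
    have hc : coeff e1 f = 1 := by
      rw [hfdef, f_decomp F i0 i1 a b q, coeff_sub, coeff_monomial, coeff_monomial,
        if_pos rfl, if_neg hne12, sub_zero]
    rw [h0, coeff_zero] at hc
    exact one_ne_zero hc.symm
  have hhom : MvPolynomial.IsWeightedHomogeneous w f d := by
    rw [← mem_weightedHomogeneousSubmodule]
    rw [hfdef, f_decomp F i0 i1 a b q]
    apply sub_mem
    · rw [mem_weightedHomogeneousSubmodule]
      apply isWeightedHomogeneous_monomial
      rw [map_add, weight_single, weight_single, hw0, Nat.mul_comm q (w i1)]
      omega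
    · rw [mem_weightedHomogeneousSubmodule]
      apply isWeightedHomogeneous_monomial
      rw [map_add, weight_single, weight_single, hw0]
      omega
  refine ⟨hfne, hhom, ?_⟩
  apply Set.eq_of_subset_of_subset (fun c hc => hc.1)
  intro c hc
  refine ⟨hc, ?_⟩
  intro x hx
  obtain ⟨v, hv0, hvc⟩ := exists_F_point hc
  rw [Phi, dif_neg hv0] at hvc
  have hrel : wRel F w ⟨emb F v, emb_ne_zero hv0⟩ x := mk_eq_mk.1 (hvc.trans hx.symm)
  obtain ⟨lam, hlam⟩ := hrel
  set cc : AlgebraicClosure F := (lam : AlgebraicClosure F) with hcc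
  set u0 : AlgebraicClosure F := algebraMap F (AlgebraicClosure F) (v i0) with hu0
  set u1 : AlgebraicClosure F := algebraMap F (AlgebraicClosure F) (v i1) with hu1
  have hx0 : x.1 i0 = cc * u0 := by
    have := hlam i0
    rw [hw0, pow_one] at this
    exact this
  have hx1 : x.1 i1 = cc ^ w i1 * u1 := hlam i1
  have hu1q : u1 ^ q = u1 := by rw [hu1, ← map_pow, FiniteField.pow_card]
  have hu0b : u0 ^ b = u0 := by
    by_cases hvi : v i0 = 0
    · rw [hu0, hvi, map_zero, zero_pow (by omega : b ≠ 0)]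
    · have hp1 : u0 ^ (q - 1) = 1 := by
        rw [hu0, ← map_pow, FiniteField.pow_card_sub_one_eq_one _ hvi, map_one]
      rw [hb, pow_add, pow_one, Nat.mul_comm, pow_mul, hp1, one_pow, one_mul]
  -- evaluate
  rw [hfdef]
  simp only [map_mul, map_sub, map_pow, MvPolynomial.map_X, eval_mul, eval_sub,
    eval_pow, eval_X]
  apply mul_eq_zero_of_right
  rw [hx0, hx1, mul_pow, ← pow_mul, hu1q, mul_pow, hu0b]
  have hstep : cc ^ b * u0 * (cc ^ w i1 * u1) = cc ^ (b + w i1) * (u0 * u1) := by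
    rw [pow_add]; ring
  rw [hstep, show b + w i1 = w i1 * q + 1 by omega]
  ring


/-- for `d ≥ w_1 q + 1` the polynomial `x_0^{d−w_1q−1} B_{0,1}` is
homogeneous of degree `d` and vanishes at every rational point; hence
`e_q(d) = p_m` in that range. -/
theorem stmt3 (F : Type) [Field F] [Fintype F] (m : ℕ) (hm : 1 ≤ m)
    (w : Fin (m + 1) → ℕ) (hpos : ∀ i, 1 ≤ w i) (hw0 : w ⟨0, by omega⟩ = 1)
    (d : ℕ) (hd : w ⟨1, by omega⟩ * Fintype.card F + 1 ≤ d)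
    (f : MvPolynomial (Fin (m + 1)) F)
    (hf : f = X ⟨0, by omega⟩ ^ (d - w ⟨1, by omega⟩ * Fintype.card F - 1) *
      (X ⟨0, by omega⟩ * X ⟨1, by omega⟩ ^ Fintype.card F -
        X ⟨0, by omega⟩ ^ (w ⟨1, by omega⟩ * (Fintype.card F - 1) + 1) *
          X ⟨1, by omega⟩)) :
    f ≠ 0 ∧ MvPolynomial.IsWeightedHomogeneous w f d ∧
      vanishSet F w f = ratPts F w ∧
      ∀ d' : ℕ, w ⟨1, by omega⟩ * Fintype.card F + 1 ≤ d' →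
        eMax F w d' = pSum (Fintype.card F) (m + 1) := by
  classical
  have h01 : (⟨0, by omega⟩ : Fin (m + 1)) ≠ ⟨1, by omega⟩ := by
    intro h
    have h' := congrArg Fin.val h
    simp at h'
  obtain ⟨h1, h2, h3⟩ :=
    main_poly F w hpos ⟨0, by omega⟩ ⟨1, by omega⟩ h01 hw0 d hd
  rw [← hf] at h1 h2 h3
  refine ⟨h1, h2, h3, ?_⟩
  intro d' hd'
  obtain ⟨g1, g2, g3⟩ :=
    main_poly F w hpos ⟨0, by omega⟩ ⟨1, by omega⟩ h01 hw0 d' hd'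
  obtain ⟨hfin, hcard⟩ := ratPts_card F w hpos
  have hub : ∀ n ∈ {n | ∃ g : MvPolynomial (Fin (m + 1)) F,
      g ≠ 0 ∧ MvPolynomial.IsWeightedHomogeneous w g d' ∧ n = (vanishSet F w g).ncard},
      n ≤ (ratPts F w).ncard := by
    rintro n ⟨g, hg0, hgh, rfl⟩
    exact Set.ncard_le_ncard (fun c hc => hc.1) hfin
  have hN : (ratPts F w).ncard ∈ {n | ∃ g : MvPolynomial (Fin (m + 1)) F,
      g ≠ 0 ∧ MvPolynomial.IsWeightedHomogeneous w g d' ∧ n = (vanishSet F w g).ncard} :=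
    ⟨_, g1, g2, by rw [g3]⟩
  have heq : eMax F w d' = (ratPts F w).ncard := by
    unfold eMax
    apply le_antisymm
    · exact csSup_le ⟨_, hN⟩ hub
    · exact le_csSup ⟨(ratPts F w).ncard, hub⟩ hN
  rw [heq, hcard]

end
end

section
/- For every integer d ≥ 1, the Hilbert function of the quotient of the weighted coordinate ring by the vanishing ideal of ℙ(w)(𝔽_q) satisfies H_{ℙ(w)(𝔽_q)}(d) ≤ H_{ℙ(w)(𝔽_q)}(d + lcm(w_0,…,w_m)·(q−1)). -/
open MvPolynomial

noncomputable section

section Stmt5Aux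

variable (F : Type) [Field F] {m : ℕ} (w : Fin (m + 1) → ℕ)

lemma stmt5_wRel_equivalence : Equivalence (wRel F w) := by
  constructor
  · intro x; exact ⟨1, fun i => by simp⟩
  · rintro x y ⟨l, hl⟩
    refine ⟨l⁻¹, fun i => ?_⟩
    rw [hl i]
    simp [Units.val_inv_eq_inv_val, inv_pow, ← mul_assoc,
      inv_mul_cancel₀ (pow_ne_zero (w i) l.ne_zero)]
  · rintro x y z ⟨l, hl⟩ ⟨l', hl'⟩
    refine ⟨l' * l, fun i => ?_⟩
    rw [hl' i, hl i, Units.val_mul, mul_pow]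
    ring

lemma stmt5_mk_eq_iff (x y : {v : Fin (m + 1) → AlgebraicClosure F // v ≠ 0}) :
    PW.mk F w x = PW.mk F w y ↔ wRel F w x y := by
  change (Quot.mk (wRel F w) x = Quot.mk (wRel F w) y) ↔ _; rw [Quot.eq]
  exact (stmt5_wRel_equivalence F w).eqvGen_iff

variable [Fintype F]

lemma stmt5_exists_good_rep {c : PW F w} (hc : c ∈ ratPts F w) :
    ∃ y : {v : Fin (m + 1) → AlgebraicClosure F // v ≠ 0},
      PW.mk F w y = c ∧ ∀ i, y.1 i ^ Fintype.card F = y.1 i := by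
  classical
  obtain ⟨x, hx, h0, hx'⟩ := hc
  obtain ⟨l, hl⟩ := (stmt5_mk_eq_iff F w x ⟨_, h0⟩).1 (hx.trans hx'.symm)
  have hq : 2 ≤ Fintype.card F := Fintype.one_lt_card
  obtain ⟨ν, hν⟩ := IsAlgClosed.exists_pow_nat_eq
    ((l⁻¹ : (AlgebraicClosure F)ˣ) : AlgebraicClosure F) (n := Fintype.card F - 1) (by omega)
  have hν0 : ν ≠ 0 := by
    intro h
    rw [h, zero_pow (by omega)] at hν
    exact (l⁻¹).ne_zero hν.symm
  have hvne : (fun i => ν ^ w i * x.1 i) ≠ (0 : Fin (m + 1) → AlgebraicClosure F) := by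
    intro h
    apply x.2
    funext i
    have := congrFun h i
    simp only [Pi.zero_apply] at this ⊢
    rcases mul_eq_zero.1 this with h' | h'
    · exact absurd h' (pow_ne_zero _ hν0)
    · exact h'
  refine ⟨⟨fun i => ν ^ w i * x.1 i, hvne⟩, ?_, ?_⟩
  · rw [← hx]
    exact ((stmt5_mk_eq_iff F w x _).2 ⟨Units.mk0 ν hν0, fun i => rfl⟩).symm
  · intro i
    simp only
    rw [mul_pow, ← pow_mul,
      show x.1 i ^ Fintype.card F = (l : AlgebraicClosure F) ^ w i * x.1 i from hl i]
    have hsplit : w i * Fintype.card F = w i + w i * (Fintype.card F - 1) := by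
      cases' Nat.exists_eq_add_of_le (show 1 ≤ Fintype.card F by omega) with k hk
      rw [hk, Nat.add_sub_cancel_left]; ring
    rw [hsplit, pow_add, mul_comm (w i) (Fintype.card F - 1), pow_mul, hν]
    rw [Units.val_inv_eq_inv_val, inv_pow]
    field_simp

lemma stmt5_weight_eq_sum (a : Fin (m + 1) →₀ ℕ) :
    Finsupp.weight w a = ∑ i, a i * w i := by
  rw [Finsupp.weight_apply, Finsupp.sum_fintype]
  · rfl
  · intro i; simp

lemma stmt5_eval_scale {e : ℕ} {f : MvPolynomial (Fin (m + 1)) F}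
    (hf : f.IsWeightedHomogeneous w e) (lam : AlgebraicClosure F)
    (y : Fin (m + 1) → AlgebraicClosure F) :
    aeval (fun i => lam ^ w i * y i) f = lam ^ e * aeval y f := by
  classical
  rw [aeval_def, aeval_def, eval₂_eq', eval₂_eq', Finset.mul_sum]
  apply Finset.sum_congr rfl
  intro a ha
  have hwa : Finsupp.weight w a = e := hf (mem_support_iff.1 ha)
  have : ∏ i, (lam ^ w i * y i) ^ a i = lam ^ e * ∏ i, y i ^ a i := by
    rw [← hwa, stmt5_weight_eq_sum]
    rw [Finset.prod_congr rfl (fun i _ => mul_pow (lam ^ w i) (y i) (a i)),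
      Finset.prod_mul_distrib]
    congr 1
    rw [← Finset.prod_pow_eq_pow_sum]
    apply Finset.prod_congr rfl
    intro i _
    rw [← pow_mul, mul_comm (w i) (a i)]
  rw [this]; ring

lemma stmt5_whs_le_rtd (hpos : ∀ i, 1 ≤ w i) (d : ℕ) :
    weightedHomogeneousSubmodule F w d ≤ restrictTotalDegree (Fin (m + 1)) F d := by
  intro f hf
  rw [mem_restrictTotalDegree, totalDegree]
  apply Finset.sup_le
  intro a ha
  have hwa : Finsupp.weight w a = d :=
    (mem_weightedHomogeneousSubmodule F w d f).1 hf (mem_support_iff.1 ha)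
  calc (a.sum fun _ e => e) = ∑ i, a i := by
        rw [Finsupp.sum_fintype]; intro i; rfl
    _ ≤ ∑ i, a i * w i := Finset.sum_le_sum fun i _ =>
        Nat.le_mul_of_pos_right _ (hpos i)
    _ = d := by rw [← stmt5_weight_eq_sum, hwa]

lemma stmt5_whs_fd (hpos : ∀ i, 1 ≤ w i) (d : ℕ) :
    FiniteDimensional F ↥(weightedHomogeneousSubmodule F w d) :=
  Submodule.finiteDimensional_of_le (stmt5_whs_le_rtd F w hpos d)

lemma stmt5_aeval_eq_eval_map (y : Fin (m + 1) → AlgebraicClosure F)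
    (f : MvPolynomial (Fin (m + 1)) F) :
    MvPolynomial.eval y (MvPolynomial.map (algebraMap F (AlgebraicClosure F)) f) =
      MvPolynomial.aeval y f := by
  rw [← eval₂_eq_eval_map, aeval_def]

/-- Ideal of polynomials vanishing at all representatives of all rational points. -/
def stmt5_vanishIdeal' : Ideal (MvPolynomial (Fin (m + 1)) F) where
  carrier := {g | ∀ c ∈ ratPts F w, ∀ x, PW.mk F w x = c →
      MvPolynomial.eval x.1 (MvPolynomial.map (algebraMap F (AlgebraicClosure F)) g) = 0}
  add_mem' := fun ha hb c hc x hx => by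
    simp only [Set.mem_setOf_eq, map_add] at *
    rw [ha c hc x hx, hb c hc x hx, add_zero]
  zero_mem' := fun c hc x hx => by simp
  smul_mem' := fun r g hg c hc x hx => by
    simp only [Set.mem_setOf_eq, smul_eq_mul, map_mul] at *
    rw [hg c hc x hx, mul_zero]

lemma stmt5_vanishingIdeal_le : vanishingIdeal F w ≤ stmt5_vanishIdeal' F w :=
  Ideal.span_le.2 fun _ hg => hg.2

/-- Evaluation at chosen representatives of rational points. -/
def stmt5_evMap
    (rep : {c : PW F w // c ∈ ratPts F w} → {v : Fin (m + 1) → AlgebraicClosure F // v ≠ 0})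
    (d : ℕ) :
    ↥(weightedHomogeneousSubmodule F w d) →ₗ[F]
      ({c : PW F w // c ∈ ratPts F w} → AlgebraicClosure F) :=
  (LinearMap.pi fun c => (MvPolynomial.aeval (rep c).1).toLinearMap).comp
    (weightedHomogeneousSubmodule F w d).subtype

lemma stmt5_ker_evMap
    (rep : {c : PW F w // c ∈ ratPts F w} → {v : Fin (m + 1) → AlgebraicClosure F // v ≠ 0})
    (hrep1 : ∀ c, PW.mk F w (rep c) = c.1) (d : ℕ) :
    LinearMap.ker (stmt5_evMap F w rep d) =
      Submodule.comap (weightedHomogeneousSubmodule F w d).subtype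
        (Submodule.restrictScalars F (vanishingIdeal F w)) := by
  ext f
  simp only [LinearMap.mem_ker, Submodule.mem_comap, Submodule.restrictScalars_mem]
  constructor
  · intro h
    have hev : ∀ c, MvPolynomial.aeval (rep c).1 (f : MvPolynomial (Fin (m + 1)) F) = 0 :=
      fun c => congrFun h c
    apply Ideal.subset_span
    refine ⟨⟨d, (mem_weightedHomogeneousSubmodule F w d _).1 f.2⟩, ?_⟩
    intro c hc x hx
    obtain ⟨l, hl⟩ := (stmt5_mk_eq_iff F w (rep ⟨c, hc⟩) x).1 ((hrep1 ⟨c, hc⟩).trans hx.symm)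
    rw [stmt5_aeval_eq_eval_map]
    have hxeq : x.1 = fun i => (l : AlgebraicClosure F) ^ w i * (rep ⟨c, hc⟩).1 i := funext hl
    rw [hxeq]
    show (MvPolynomial.aeval fun i => (l : AlgebraicClosure F) ^ w i * (rep ⟨c, hc⟩).1 i)
      (f : MvPolynomial (Fin (m + 1)) F) = 0
    rw [stmt5_eval_scale F w ((mem_weightedHomogeneousSubmodule F w d _).1 f.2) _ _,
      hev, mul_zero]
  · intro h
    funext c
    show MvPolynomial.aeval (rep c).1 (f : MvPolynomial (Fin (m + 1)) F) = 0
    have := stmt5_vanishingIdeal_le F w h c.1 c.2 (rep c) (hrep1 c)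
    rwa [stmt5_aeval_eq_eval_map] at this

lemma stmt5_range_mono
    (rep : {c : PW F w // c ∈ ratPts F w} → {v : Fin (m + 1) → AlgebraicClosure F // v ≠ 0})
    (hrep2 : ∀ c i, (rep c).1 i ^ Fintype.card F = (rep c).1 i)
    (d : ℕ) (hd : 1 ≤ d) :
    LinearMap.range (stmt5_evMap F w rep d) ≤
      LinearMap.range (stmt5_evMap F w rep (d + Finset.univ.lcm w * (Fintype.card F - 1))) := by
  classical
  rintro _ ⟨f, rfl⟩
  have hsum : stmt5_evMap F w rep d f =
      ∑ a ∈ (f : MvPolynomial (Fin (m + 1)) F).support,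
        fun c => MvPolynomial.aeval (rep c).1
          (monomial a (coeff a (f : MvPolynomial (Fin (m + 1)) F))) := by
    funext c
    rw [Finset.sum_apply]
    show MvPolynomial.aeval (rep c).1 (f : MvPolynomial (Fin (m + 1)) F) = _
    conv_lhs => rw [(f : MvPolynomial (Fin (m + 1)) F).as_sum]
    rw [map_sum]
  rw [hsum]
  apply Submodule.sum_mem
  intro a ha
  have hwa : Finsupp.weight w a = d :=
    (mem_weightedHomogeneousSubmodule F w d _).1 f.2 (mem_support_iff.1 ha)
  have hane : a ≠ 0 := by
    intro h; rw [h, map_zero] at hwa; omega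
  obtain ⟨i, hi⟩ := Finsupp.ne_iff.1 hane
  simp only [Finsupp.coe_zero, Pi.zero_apply] at hi
  have hq2 : 2 ≤ Fintype.card F := Fintype.one_lt_card
  have hdvd : w i ∣ Finset.univ.lcm w := Finset.dvd_lcm (Finset.mem_univ i)
  set L := Finset.univ.lcm w with hLdef
  set q := Fintype.card F with hqdef
  set k := L / w i * (q - 1) with hkdef
  have hwk : k * w i = L * (q - 1) := by
    rw [hkdef, mul_comm (L / w i) (q - 1), mul_assoc, Nat.div_mul_cancel hdvd, mul_comm]
  set b := a + Finsupp.single i k with hbdef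
  have hwb : Finsupp.weight w b = d + L * (q - 1) := by
    rw [hbdef, map_add, hwa]
    congr 1
    rw [Finsupp.weight_apply, Finsupp.sum_single_index]
    · rw [smul_eq_mul, hwk]
    · simp
  refine ⟨⟨monomial b (coeff a (f : MvPolynomial (Fin (m + 1)) F)),
    (mem_weightedHomogeneousSubmodule F w _ _).2
      (isWeightedHomogeneous_monomial _ _ _ hwb)⟩, ?_⟩
  funext c
  show MvPolynomial.aeval (rep c).1 (monomial b _) = MvPolynomial.aeval (rep c).1 (monomial a _)
  rw [aeval_monomial, aeval_monomial, Finsupp.prod_pow, Finsupp.prod_pow]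
  congr 1
  set y := (rep c).1 with hydef
  have hbj : ∀ j, b j = a j + Finsupp.single i k j := fun j => Finsupp.add_apply _ _ _
  calc ∏ j, y j ^ b j = (∏ j, y j ^ a j) * ∏ j, y j ^ (Finsupp.single i k) j := by
        rw [← Finset.prod_mul_distrib]
        exact Finset.prod_congr rfl fun j _ => by rw [hbj j, pow_add]
    _ = (∏ j, y j ^ a j) * y i ^ k := by
        congr 1
        rw [Finset.prod_eq_single i (fun j _ hj => by
            rw [Finsupp.single_apply, if_neg (fun h => hj h.symm), pow_zero])
          (fun h => absurd (Finset.mem_univ i) h)]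
        rw [Finsupp.single_apply, if_pos rfl]
    _ = ∏ j, y j ^ a j := by
        by_cases hyi : y i = 0
        · have hz : ∏ j, y j ^ a j = 0 :=
            Finset.prod_eq_zero (Finset.mem_univ i) (by rw [hyi, zero_pow hi])
          rw [hz, zero_mul]
        · have h1 : y i ^ (q - 1) = 1 := by
            have h2 : y i ^ (q - 1) * y i = 1 * y i := by
              rw [one_mul, ← pow_succ, Nat.sub_add_cancel (by omega)]
              exact hrep2 c i
            exact mul_right_cancel₀ hyi h2
          have hk1 : y i ^ k = 1 := by
            rw [hkdef, mul_comm, pow_mul, h1, one_pow]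
          rw [hk1, mul_one]

end Stmt5Aux


/-- Lemma 2.8 of the paper: monotonicity of the Hilbert function
along steps of size `lcm(w)·(q−1)`. -/
theorem stmt5 (F : Type) [Field F] [Fintype F] (m ℓ : ℕ) (w : Fin (m + 1) → ℕ)
    (hℓ1 : 1 ≤ ℓ) (hℓm : ℓ + 1 ≤ m)
    (hpos : ∀ i, 1 ≤ w i)
    (hw0 : w ⟨0, by omega⟩ = 1)
    (hweq : ∀ i : Fin (m + 1), 1 ≤ (i : ℕ) → (i : ℕ) ≤ ℓ → w i = w ⟨1, by omega⟩)
    (hlt : w ⟨ℓ, by omega⟩ < w ⟨ℓ + 1, by omega⟩)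
    (hmono : ∀ i j : Fin (m + 1), ℓ + 1 ≤ (i : ℕ) → i ≤ j → w i ≤ w j)
    (d : ℕ) (hd : 1 ≤ d) :
    hilb F w d ≤ hilb F w (d + Finset.univ.lcm w * (Fintype.card F - 1)) := by
  classical
  choose rep hrep1 hrep2 using fun c : {c : PW F w // c ∈ ratPts F w} =>
    stmt5_exists_good_rep F w c.2
  haveI : FiniteDimensional F
      ↥(weightedHomogeneousSubmodule F w (d + Finset.univ.lcm w * (Fintype.card F - 1))) :=
    stmt5_whs_fd F w hpos _
  have e1 : hilb F w d = Module.finrank F ↥(LinearMap.range (stmt5_evMap F w rep d)) := by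
    rw [hilb, ← stmt5_ker_evMap F w rep hrep1 d]
    exact (LinearEquiv.finrank_eq (LinearMap.quotKerEquivRange _))
  have e2 : hilb F w (d + Finset.univ.lcm w * (Fintype.card F - 1)) =
      Module.finrank F ↥(LinearMap.range
        (stmt5_evMap F w rep (d + Finset.univ.lcm w * (Fintype.card F - 1)))) := by
    rw [hilb, ← stmt5_ker_evMap F w rep hrep1]
    exact (LinearEquiv.finrank_eq (LinearMap.quotKerEquivRange _))
  rw [e1, e2]
  exact Submodule.finrank_mono (stmt5_range_mono F w rep hrep2 d hd)

end
end
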